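/- Let Γ act minimally by homeomorphisms on a compact space X, and let U be an adapted clopen set with stabilizer subgroup Γ_U = {g ∈ Γ | g·U ∩ U ≠ ∅}. Then the translates {g·U | g ∈ Γ} form a finite partition of X, and consequently Γ_U has finite index in Γ. -/

import Mathlib

open Pointwise

/-- For a minimal equicontinuous action on a compact metric space, the translates of an
adapted clopen set `U` form a finite partition of `X`, and the stabilizer subgroup
`Γ_U = {g | g • U ∩ U ≠ ∅}` has finite index. -/
theorem adapted_set_translates_finite_partition
    {Γ X : Type*} [Group Γ] [MetricSpace X] [CompactSpace X]
    [TopologicalSpace.MetrizableSpace X] [TotallyDisconnectedSpace X] [PerfectSpace X]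
    [MulAction Γ X] (hcont : ∀ g : Γ, Continuous fun x : X => g • x)
    (hmin : ∀ x : X, Dense (MulAction.orbit Γ x))
    (hequi : ∀ ε > (0:ℝ), ∃ δ > (0:ℝ), ∀ (x y : X) (g : Γ),
      dist x y < δ → dist (g • x) (g • y) < ε)
    (U : Set X) (hne : U.Nonempty) (hclopen : IsClopen U)
    (hadapted : ∀ g : Γ, (g • U) ∩ U ≠ ∅ → g • U = U) :
    ∃ H : Subgroup Γ, (∀ g : Γ, g ∈ H ↔ (g • U) ∩ U ≠ ∅) ∧ H.FiniteIndex ∧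
      {V : Set X | ∃ g : Γ, V = g • U}.Finite ∧
      (∀ x : X, ∃ g : Γ, x ∈ g • U) ∧
      (∀ g g' : Γ, g • U = g' • U ∨ Disjoint (g • U) (g' • U)) := by
  -- translates are clopen
  have hpre : ∀ g : Γ, g • U = (fun x : X => g⁻¹ • x) ⁻¹' U := by
    intro g
    ext x
    simp [Set.mem_smul_set_iff_inv_smul_mem]
  have hclopen' : ∀ g : Γ, IsClopen (g • U) := by
    intro g
    rw [hpre g]
    exact ⟨hclopen.1.preimage (hcont g⁻¹), hclopen.2.preimage (hcont g⁻¹)⟩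
  -- cover
  have hcover : ∀ x : X, ∃ g : Γ, x ∈ g • U := by
    intro x
    obtain ⟨y, hyU, g, rfl⟩ := (hmin x).inter_open_nonempty U hclopen.2 hne
    exact ⟨g⁻¹, by
      rw [Set.mem_smul_set_iff_inv_smul_mem, inv_inv]; exact hyU⟩
  -- dichotomy
  have hdich : ∀ g g' : Γ, g • U = g' • U ∨ Disjoint (g • U) (g' • U) := by
    intro g g'
    rcases Set.eq_empty_or_nonempty ((g • U) ∩ (g' • U)) with h | h
    · exact Or.inr (Set.disjoint_iff_inter_eq_empty.mpr h)
    · left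
      have hne' : ((g'⁻¹ * g) • U) ∩ U ≠ ∅ := by
        obtain ⟨x, hx1, hx2⟩ := h
        refine Set.nonempty_iff_ne_empty.mp ⟨g'⁻¹ • x, ?_, ?_⟩
        · rw [mul_smul]
          exact Set.smul_mem_smul_set hx1
        · exact Set.mem_smul_set_iff_inv_smul_mem.mp hx2
      have := hadapted _ hne'
      rw [mul_smul] at this
      calc g • U = g' • (g'⁻¹ • g • U) := by rw [smul_inv_smul]
        _ = g' • U := by rw [this]
  -- finiteness of translates
  have hfin : {V : Set X | ∃ g : Γ, V = g • U}.Finite := by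
    obtain ⟨s, hs⟩ := IsCompact.elim_finite_subcover isCompact_univ
      (fun g : Γ => g • U) (fun g => (hclopen' g).2)
      (fun x _ => Set.mem_iUnion.mpr (hcover x))
    apply Set.Finite.subset (s.finite_toSet.image (fun g => g • U))
    rintro V ⟨g, rfl⟩
    obtain ⟨x, hx⟩ : (g • U).Nonempty := hne.smul_set
    have : x ∈ ⋃ g' ∈ s, g' • U := hs (Set.mem_univ x)
    obtain ⟨g', hg's, hxg'⟩ := Set.mem_iUnion₂.mp this
    rcases hdich g g' with h | h
    · exact ⟨g', hg's, h.symm⟩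
    · exact absurd (h.ne_of_mem hx hxg' rfl) (fun h' => h')
  -- the subgroup
  refine ⟨MulAction.stabilizer Γ U, ?_, ?_, hfin, hcover, hdich⟩
  · intro g
    rw [MulAction.mem_stabilizer_iff]
    constructor
    · intro h
      rw [h]
      rw [Set.inter_self]
      exact Set.nonempty_iff_ne_empty.mp hne
    · exact hadapted g
  · -- finite index
    set H := MulAction.stabilizer Γ U
    have hrel : ∀ g g' : Γ, g⁻¹ * g' ∈ H → g • U = g' • U := by
      intro g g' h
      have : (g⁻¹ * g') • U = U := h
      rw [mul_smul] at this
      calc g • U = g • g⁻¹ • g' • U := by rw [this]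
        _ = g' • U := by rw [smul_inv_smul]
    have : Finite (Γ ⧸ H) := by
      let f : Γ ⧸ H → {V : Set X | ∃ g : Γ, V = g • U} :=
        Quotient.lift (fun g => ⟨g • U, g, rfl⟩)
          (fun g g' h => by
            apply Subtype.ext
            exact hrel g g' (QuotientGroup.leftRel_apply.mp h))
      have hinj : Function.Injective f := by
        intro a b
        induction a using Quotient.inductionOn with | h g =>
        induction b using Quotient.inductionOn with | h g' =>
        intro h
        have h' : g • U = g' • U := congrArg Subtype.val h
        refine Quotient.sound (QuotientGroup.leftRel_apply.mpr ?_)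
        show (g⁻¹ * g') • U = U
        rw [mul_smul, ← h', inv_smul_smul]
      have : Finite {V : Set X | ∃ g : Γ, V = g • U} := hfin
      exact Finite.of_injective f hinj
    exact Subgroup.finiteIndex_of_finite_quotient
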